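/- arXiv:1110.3699 — 3 statements merged into one kernel-verified Lean document; each statement's English description precedes it below -/
import Mathlib

section
/- Let L be a finite-dimensional solvable Lie algebra (over a field of characteristic 0, or of characteristic p with L² nilpotent of class < p). Let A/B be a chief factor of L complemented by a maximal subalgebra M (so L = A + M and A ∩ M = B). If A ⊄ M then B = A ∩ M_L and (A + M_L)/M_L is a minimal abelian ideal of L/M_L isomorphic as L-module to A/B. -/
/-- The core of a subalgebra: the largest ideal of `L` contained in it. -/
noncomputable def lieCore (F : Type*) [Field F] (L : Type*) [LieRing L] [LieAlgebra F L]
    (M : LieSubalgebra F L) : LieIdeal F L :=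
  sSup {I : LieIdeal F L | (I : Set L) ⊆ (M : Set L)}

/-- The core of `M` is contained in `M`. -/
theorem lieCore_le (F : Type*) [Field F] (L : Type*) [LieRing L] [LieAlgebra F L]
    (M : LieSubalgebra F L) : (lieCore F L M : Set L) ⊆ (M : Set L) := by
  intro x hx
  have hx' : x ∈ (LieSubmodule.toSubmodule (lieCore F L M)) := hx
  rw [lieCore, LieSubmodule.sSup_toSubmodule] at hx'
  have : sSup (LieSubmodule.toSubmodule '' {I : LieIdeal F L | (I : Set L) ⊆ (M : Set L)})
      ≤ M.toSubmodule := by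
    apply sSup_le
    rintro p ⟨I, hI, rfl⟩
    intro y hy
    exact hI hy
  exact this hx'

/-- In a solvable Lie algebra, chief factors are abelian. -/
theorem lie_self_le_of_chief (F : Type*) [Field F]
    (L : Type*) [LieRing L] [LieAlgebra F L] [LieAlgebra.IsSolvable L]
    (A B : LieIdeal F L) (hBA : B < A)
    (hchief : ∀ I : LieIdeal F L, B ≤ I → I ≤ A → I = B ∨ I = A) :
    ⁅A, A⁆ ≤ B := by
  have hAA : ⁅A, A⁆ ≤ A := LieSubmodule.lie_le_left A A
  rcases hchief (B ⊔ ⁅A, A⁆) le_sup_left (sup_le hBA.le hAA) with h | h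
  · exact le_trans le_sup_right h.le
  · exfalso
    have key : ∀ n : ℕ, A ≤ B ⊔ LieAlgebra.derivedSeriesOfIdeal F L n A := by
      intro n
      induction n with
      | zero => rw [LieAlgebra.derivedSeriesOfIdeal_zero]; exact le_sup_right
      | succ n ih =>
        have h1 : ⁅A, A⁆ ≤ B ⊔ LieAlgebra.derivedSeriesOfIdeal F L (n + 1) A := by
          set D := LieAlgebra.derivedSeriesOfIdeal F L n A
          calc ⁅A, A⁆ ≤ ⁅B ⊔ D, B ⊔ D⁆ := LieSubmodule.mono_lie ih ih
            _ ≤ B ⊔ ⁅D, D⁆ := by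
                rw [LieSubmodule.sup_lie, LieSubmodule.lie_sup, LieSubmodule.lie_sup]
                refine sup_le (sup_le ?_ ?_) (sup_le ?_ ?_)
                · exact le_sup_of_le_left (LieSubmodule.lie_le_left _ _)
                · exact le_sup_of_le_left (LieSubmodule.lie_le_left _ _)
                · exact le_sup_of_le_left (LieSubmodule.lie_le_right _ _)
                · exact le_sup_right
            _ = B ⊔ LieAlgebra.derivedSeriesOfIdeal F L (n + 1) A := by
                rw [LieAlgebra.derivedSeriesOfIdeal_succ]
        calc A = B ⊔ ⁅A, A⁆ := h.symm
          _ ≤ B ⊔ (B ⊔ LieAlgebra.derivedSeriesOfIdeal F L (n + 1) A) := sup_le_sup le_rfl h1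
          _ = B ⊔ LieAlgebra.derivedSeriesOfIdeal F L (n + 1) A := by rw [← sup_assoc, sup_idem]
    obtain ⟨k, hk⟩ := LieAlgebra.IsSolvable.solvable (R := F) (L := L)
    have hDk : LieAlgebra.derivedSeriesOfIdeal F L k A = ⊥ := by
      rw [eq_bot_iff, ← hk, LieAlgebra.derivedSeries_def]
      exact LieAlgebra.derivedSeriesOfIdeal_le le_top le_rfl
    have : A ≤ B := by
      have := key k
      rwa [hDk, sup_bot_eq] at this
    exact hBA.not_ge this

/-- Let `L` be a finite-dimensional solvable Lie algebra (over a field of characteristic `0`,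
or of characteristic `p` with `L²` nilpotent of class `< p`), and let `A/B` be a chief factor
of `L` complemented by a maximal subalgebra `M` with `A ⊄ M`.  Then `B = A ∩ M_L` and
`(A + M_L)/M_L` is a minimal abelian ideal of `L/M_L`, isomorphic as an `L`-module to
`A/B`. -/
theorem chief_factor_complemented (F : Type*) [Field F]
    (L : Type*) [LieRing L] [LieAlgebra F L] [FiniteDimensional F L]
    [LieAlgebra.IsSolvable L]
    (hchar : CharZero F ∨ ∃ p : ℕ, p.Prime ∧ CharP F p ∧
      LieModule.lowerCentralSeries F
        (⁅(⊤ : LieIdeal F L), (⊤ : LieIdeal F L)⁆ : LieIdeal F L)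
        (⁅(⊤ : LieIdeal F L), (⊤ : LieIdeal F L)⁆ : LieIdeal F L) (p - 1) = ⊥)
    (A B : LieIdeal F L) (hBA : B < A)
    (hchief : ∀ I : LieIdeal F L, B ≤ I → I ≤ A → I = B ∨ I = A)
    (M : LieSubalgebra F L) (hM : IsCoatom M)
    (hsum : ∀ x : L, ∃ a ∈ A, ∃ m ∈ M, x = a + m)
    (hint : {z : L | z ∈ A ∧ z ∈ M} = (B : Set L))
    (hAM : ¬ ((A : Set L) ⊆ (M : Set L))) :
    (B : Set L) = {z : L | z ∈ A ∧ z ∈ lieCore F L M} ∧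
    lieCore F L M < A ⊔ lieCore F L M ∧
    (∀ I : LieIdeal F L, lieCore F L M ≤ I → I ≤ A ⊔ lieCore F L M →
      I = lieCore F L M ∨ I = A ⊔ lieCore F L M) ∧
    (∀ x ∈ A ⊔ lieCore F L M, ∀ y ∈ A ⊔ lieCore F L M, ⁅x, y⁆ ∈ lieCore F L M) ∧
    ∃ e : ((A ⊔ lieCore F L M : LieIdeal F L) ⧸
            LieSubmodule.comap
              (LieSubmodule.incl ((A ⊔ lieCore F L M : LieIdeal F L) : LieSubmodule F L L))
              (lieCore F L M : LieSubmodule F L L)) ≃ₗ[F]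
          ((A : LieIdeal F L) ⧸
            LieSubmodule.comap (LieSubmodule.incl ((A : LieIdeal F L) : LieSubmodule F L L))
              (B : LieSubmodule F L L)),
      ∀ (x : L) v, e ⁅x, v⁆ = ⁅x, e v⁆ := by
  set C := lieCore F L M with hC
  -- B ⊆ M
  have hBM : (B : Set L) ⊆ (M : Set L) := by
    intro b hb
    have : b ∈ {z : L | z ∈ A ∧ z ∈ M} := by rw [hint]; exact hb
    exact this.2
  -- B ≤ C
  have hBC : B ≤ C := le_sSup hBM
  have hCM : (C : Set L) ⊆ (M : Set L) := lieCore_le F L M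
  -- A ∩ C = B  (as membership)
  have hACB : ∀ z : L, z ∈ A → z ∈ C → z ∈ B := by
    intro z hzA hzC
    have : z ∈ {z : L | z ∈ A ∧ z ∈ M} := ⟨hzA, hCM hzC⟩
    rwa [hint] at this
  have habelian : ⁅A, A⁆ ≤ B := lie_self_le_of_chief F L A B hBA hchief
  have hAS : A ≤ A ⊔ C := le_sup_left
  have hCS : C ≤ A ⊔ C := le_sup_right
  refine ⟨?_, ?_, ?_, ?_, ?_⟩
  · -- B = A ∩ C
    ext z
    constructor
    · intro hz
      exact ⟨hBA.le hz, hBC hz⟩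
    · rintro ⟨hzA, hzC⟩
      exact hACB z hzA hzC
  · -- C < A ⊔ C
    refine lt_of_le_of_ne le_sup_right ?_
    intro h
    apply hAM
    intro a ha
    have : a ∈ C := by rw [h]; exact hAS ha
    exact hCM this
  · -- minimality
    intro I hCI hIS
    rcases hchief (I ⊓ A) (le_inf (hBC.trans hCI) hBA.le) inf_le_right with h | h
    · left
      refine le_antisymm ?_ hCI
      intro x hx
      obtain ⟨a, ha, c, hc, hac⟩ := (LieSubmodule.mem_sup _ _ _).mp (hIS hx)
      have haI : a ∈ I := by
        have : a = x - c := by rw [← hac, add_sub_cancel_right]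
        rw [this]
        exact sub_mem hx (hCI hc)
      have haB : a ∈ B := h ▸ (LieSubmodule.mem_inf _ _ _).mpr ⟨haI, ha⟩
      rw [← hac]
      exact add_mem (hBC haB) hc
    · right
      have hAI : A ≤ I := h ▸ (inf_le_left : I ⊓ A ≤ I)
      exact le_antisymm hIS (sup_le hAI hCI)
  · -- abelian
    intro x hx y hy
    obtain ⟨a, ha, c, hc, hac⟩ := (LieSubmodule.mem_sup _ _ _).mp hx
    obtain ⟨a', ha', c', hc', hac'⟩ := (LieSubmodule.mem_sup _ _ _).mp hy
    have haa : ⁅a, a'⁆ ∈ C := hBC (habelian (LieSubmodule.lie_mem_lie ha ha'))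
    have h1 : ⁅a, c'⁆ ∈ C := C.lie_mem hc'
    have h2 : ⁅c, a'⁆ ∈ C := by
      have : ⁅a', c⁆ ∈ C := C.lie_mem hc
      have h' : ⁅c, a'⁆ = -⁅a', c⁆ := (lie_skew c a').symm
      rw [h']
      exact neg_mem this
    have h3 : ⁅c, c'⁆ ∈ C := C.lie_mem hc'
    have hxy : ⁅x, y⁆ = ⁅a, a'⁆ + ⁅a, c'⁆ + (⁅c, a'⁆ + ⁅c, c'⁆) := by
      rw [← hac, ← hac', add_lie, lie_add, lie_add]
    rw [hxy]
    exact add_mem (add_mem haa h1) (add_mem h2 h3)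
  · -- the isomorphism
    set S : LieIdeal F L := A ⊔ C with hS
    set NS : LieSubmodule F L S :=
      LieSubmodule.comap (LieSubmodule.incl ((S : LieIdeal F L) : LieSubmodule F L L))
        (C : LieSubmodule F L L) with hNS
    set NA : LieSubmodule F L A :=
      LieSubmodule.comap (LieSubmodule.incl ((A : LieIdeal F L) : LieSubmodule F L L))
        (B : LieSubmodule F L L) with hNA
    have memNS : ∀ s : S, s ∈ NS ↔ (s : L) ∈ C := fun s => Iff.rfl
    have memNA : ∀ a : A, a ∈ NA ↔ (a : L) ∈ B := fun a => Iff.rfl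
    -- inclusion A →ₗ S
    let ι : A →ₗ[F] S :=
      { toFun := fun a => ⟨(a : L), hAS a.2⟩
        map_add' := fun a b => rfl
        map_smul' := fun t a => rfl }
    let f1 : A →ₗ[F] (S ⧸ NS) := (NS.toSubmodule.mkQ).comp ι
    have hker : NA.toSubmodule ≤ LinearMap.ker f1 := by
      intro a ha
      have haB : (a : L) ∈ B := ha
      rw [LinearMap.mem_ker]
      show Submodule.Quotient.mk (ι a) = 0
      exact (Submodule.Quotient.mk_eq_zero NS.toSubmodule).mpr (hBC haB)
    let ψ : (A ⧸ NA) →ₗ[F] (S ⧸ NS) := NA.toSubmodule.liftQ f1 hker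
    have hψ_mk : ∀ a : A, ψ (Submodule.Quotient.mk a) =
        Submodule.Quotient.mk (⟨(a : L), hAS a.2⟩ : S) := fun a => rfl
    have hsurj : Function.Surjective ψ := by
      intro q
      obtain ⟨s, rfl⟩ := Submodule.Quotient.mk_surjective NS.toSubmodule q
      obtain ⟨a, ha, c, hc, hac⟩ := (LieSubmodule.mem_sup _ _ _).mp s.2
      refine ⟨Submodule.Quotient.mk (⟨a, ha⟩ : A), ?_⟩
      rw [hψ_mk]
      rw [Submodule.Quotient.eq]
      have : ((⟨a, hAS ha⟩ : S) : L) - (s : L) = -c := by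
        simp only [← hac]; abel
      show (⟨a, hAS ha⟩ : S) - s ∈ NS
      rw [memNS]
      show (((⟨a, hAS ha⟩ : S) - s : S) : L) ∈ C
      rw [AddSubgroupClass.coe_sub, this]
      exact neg_mem hc
    have hinj : Function.Injective ψ := by
      rw [← LinearMap.ker_eq_bot, eq_bot_iff]
      intro p hp
      obtain ⟨a, rfl⟩ := Submodule.Quotient.mk_surjective NA.toSubmodule p
      rw [LinearMap.mem_ker, hψ_mk, Submodule.Quotient.mk_eq_zero] at hp
      have : (a : L) ∈ C := hp
      rw [Submodule.mem_bot, Submodule.Quotient.mk_eq_zero]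
      show a ∈ NA
      rw [memNA]
      exact hACB _ a.2 this
    have hψ_lie : ∀ (x : L) (p : A ⧸ NA), ψ ⁅x, p⁆ = ⁅x, ψ p⁆ := by
      intro x p
      obtain ⟨a, rfl⟩ := Submodule.Quotient.mk_surjective NA.toSubmodule p
      have h1 : (⁅x, Submodule.Quotient.mk a⁆ : A ⧸ NA) =
          Submodule.Quotient.mk ⁅x, a⁆ := by
        exact ((LieSubmodule.Quotient.mk' NA).map_lie x a).symm
      have h2 : (⁅x, Submodule.Quotient.mk (⟨(a : L), hAS a.2⟩ : S)⁆ : S ⧸ NS) =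
          Submodule.Quotient.mk ⁅x, (⟨(a : L), hAS a.2⟩ : S)⁆ := by
        exact ((LieSubmodule.Quotient.mk' NS).map_lie x _).symm
      rw [h1, hψ_mk, hψ_mk, h2]
      exact congrArg Submodule.Quotient.mk (Subtype.ext rfl)
    let eψ : (A ⧸ NA) ≃ₗ[F] (S ⧸ NS) := LinearEquiv.ofBijective ψ ⟨hinj, hsurj⟩
    refine ⟨eψ.symm, ?_⟩
    intro x v
    apply eψ.injective
    rw [eψ.apply_symm_apply]
    have : eψ ⁅x, eψ.symm v⁆ = ψ ⁅x, eψ.symm v⁆ := rfl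
    rw [this, hψ_lie]
    have h4 : ψ (eψ.symm v) = v := eψ.apply_symm_apply v
    rw [h4]
end

section
/- Let L be a finite-dimensional solvable Lie algebra over any field, and let M, K be maximal subalgebras of L with K_L ⊄ M_L (the core of K not contained in the core of M). Then M ∩ K is a maximal subalgebra of M. -/
/-- The sum of a subalgebra and an ideal is a subalgebra. -/
def sumAlg {F : Type*} [Field F] {L : Type*} [LieRing L] [LieAlgebra F L]
    (S : LieSubalgebra F L) (I : LieIdeal F L) : LieSubalgebra F L :=
  { S.toSubmodule ⊔ LieSubmodule.toSubmodule I with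
    lie_mem' := by
      intro x y hx hy
      have hx' : x ∈ S.toSubmodule ⊔ LieSubmodule.toSubmodule I := hx
      have hy' : y ∈ S.toSubmodule ⊔ LieSubmodule.toSubmodule I := hy
      show ⁅x, y⁆ ∈ S.toSubmodule ⊔ LieSubmodule.toSubmodule I
      rw [Submodule.mem_sup] at hx' hy' ⊢
      obtain ⟨s, hs, i, hi, rfl⟩ := hx'
      obtain ⟨t, ht, j, hj, rfl⟩ := hy'
      refine ⟨⁅s, t⁆, S.lie_mem hs ht, ⁅s, j⁆ + ⁅i, t⁆ + ⁅i, j⁆, ?_, ?_⟩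
      · refine add_mem (add_mem (I.lie_mem hj) ?_) (I.lie_mem hj)
        have : (⁅i, t⁆ : L) = -⁅t, i⁆ := by rw [← lie_skew]
        rw [this]
        exact neg_mem (I.lie_mem hi)
      · simp only [add_lie, lie_add]; abel }

theorem mem_sumAlg {F : Type*} [Field F] {L : Type*} [LieRing L] [LieAlgebra F L]
    {S : LieSubalgebra F L} {I : LieIdeal F L} {x : L} :
    x ∈ sumAlg S I ↔ x ∈ S.toSubmodule ⊔ LieSubmodule.toSubmodule I := Iff.rfl

theorem lieCore_subset {F : Type*} [Field F] {L : Type*} [LieRing L] [LieAlgebra F L]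
    (M : LieSubalgebra F L) : (lieCore F L M : Set L) ⊆ (M : Set L) := by
  intro x hx
  have hx' : x ∈ LieSubmodule.toSubmodule (lieCore F L M) := hx
  rw [lieCore, LieSubmodule.sSup_toSubmodule_eq_iSup] at hx'
  have : (⨆ I ∈ {I : LieIdeal F L | (I : Set L) ⊆ (M : Set L)},
      LieSubmodule.toSubmodule I) ≤ M.toSubmodule := by
    refine iSup₂_le fun I hI => ?_
    intro y hy
    exact hI hy
  exact this hx'

/-- If `M`, `K` are maximal subalgebras of a finite-dimensional solvable Lie algebra `L`
with `K_L ⊄ M_L`, then `M ∩ K` is a maximal subalgebra of `M`. -/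
theorem inter_maximal_of_core_not_le (F : Type*) [Field F]
    (L : Type*) [LieRing L] [LieAlgebra F L] [FiniteDimensional F L]
    [LieAlgebra.IsSolvable L]
    (M K : LieSubalgebra F L) (hM : IsCoatom M) (hK : IsCoatom K)
    (hcore : ¬ lieCore F L K ≤ lieCore F L M) :
    M ⊓ K < M ∧ ∀ S : LieSubalgebra F L, M ⊓ K < S → S ≤ M → S = M := by
  set C := lieCore F L K with hC
  -- C ≤ K (as submodules)
  have hCK : LieSubmodule.toSubmodule C ≤ K.toSubmodule := fun x hx => lieCore_subset K hx
  -- C not contained in M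
  have hCM : ¬ ((C : Set L) ⊆ (M : Set L)) := fun h => hcore (le_sSup h)
  -- M ≠ K
  have hMK : M ≠ K := fun h => hcore (h ▸ le_refl _)
  -- M ⊓ K < M
  have hMKlt : M ⊓ K < M := by
    refine lt_of_le_of_ne inf_le_left fun h => ?_
    have hMleK : M ≤ K := by rw [← h]; exact inf_le_right
    rcases lt_or_eq_of_le hMleK with h' | h'
    · exact hK.1 (hM.2 K h')
    · exact hMK h'
  -- M ⊔ C = ⊤ at submodule level
  have hMC : M.toSubmodule ⊔ LieSubmodule.toSubmodule C = ⊤ := by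
    have h1 : M < sumAlg M C := by
      refine lt_of_le_of_ne (fun x hx => Submodule.mem_sup_left hx) fun h => ?_
      apply hCM
      intro c hc
      have : c ∈ sumAlg M C := Submodule.mem_sup_right hc
      rw [← h] at this
      exact this
    have h2 : sumAlg M C = ⊤ := hM.2 _ h1
    have := congrArg LieSubalgebra.toSubmodule h2
    rwa [LieSubalgebra.top_toSubmodule] at this
  -- K = (M ⊓ K) ⊔ C at submodule level
  have hKdec : K.toSubmodule = (M ⊓ K).toSubmodule ⊔ LieSubmodule.toSubmodule C := by
    rw [LieSubalgebra.inf_toSubmodule, inf_comm (M.toSubmodule),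
      inf_sup_assoc_of_le _ hCK, hMC, inf_top_eq]
  refine ⟨hMKlt, fun S hlt hSM => ?_⟩
  have hSK : ¬ S ≤ K := fun h => (not_le_of_gt hlt) (le_inf hSM h)
  have hKS : K < sumAlg S C := by
    refine lt_of_le_of_ne ?_ fun h => ?_
    · show K.toSubmodule ≤ S.toSubmodule ⊔ LieSubmodule.toSubmodule C
      rw [hKdec]
      exact sup_le_sup_right (LieSubalgebra.toSubmodule_le_toSubmodule _ _ |>.mpr hlt.le) _
    · exact hSK (fun x hx => h ▸ (Submodule.mem_sup_left hx : x ∈ sumAlg S C))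
  have hSC : S.toSubmodule ⊔ LieSubmodule.toSubmodule C = ⊤ := by
    have := congrArg LieSubalgebra.toSubmodule (hK.2 _ hKS)
    rwa [LieSubalgebra.top_toSubmodule] at this
  have hMS : M.toSubmodule ≤ S.toSubmodule := by
    have h1 : (S.toSubmodule ⊔ LieSubmodule.toSubmodule C) ⊓ M.toSubmodule
        = S.toSubmodule ⊔ (LieSubmodule.toSubmodule C ⊓ M.toSubmodule) :=
      sup_inf_assoc_of_le _ ((LieSubalgebra.toSubmodule_le_toSubmodule _ _).mpr hSM)
    rw [hSC, top_inf_eq] at h1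
    rw [h1]
    refine sup_le le_rfl (le_trans ?_ ((LieSubalgebra.toSubmodule_le_toSubmodule _ _).mpr hlt.le))
    rw [LieSubalgebra.inf_toSubmodule]
    exact le_inf (le_trans inf_le_right le_rfl |>.trans le_rfl |>.trans le_rfl |>.trans le_rfl)
      (inf_le_left.trans hCK)
  exact le_antisymm hSM ((LieSubalgebra.toSubmodule_le_toSubmodule _ _).mp hMS)
end

section
/- Let L be a finite-dimensional solvable Lie algebra and A a minimal ideal of L. Let M, K be complements to A in L whose cores are distinct (equivalently, M and K are not conjugate under I(L:A)). Then M ∩ K is a maximal subalgebra of both M and K. -/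
section Aux

variable {F : Type*} [Field F] {L : Type*} [LieRing L] [LieAlgebra F L]

/-- A minimal (atom) ideal of a solvable Lie algebra is abelian. -/
lemma atom_abelian [LieAlgebra.IsSolvable L] {A : LieIdeal F L} (hA : IsAtom A) :
    ∀ a ∈ A, ∀ b ∈ A, ⁅a, b⁆ = 0 := by
  have hle : ⁅A, A⁆ ≤ A := LieSubmodule.lie_le_left A A
  have hne : ⁅A, A⁆ ≠ A := by
    intro h
    obtain ⟨k, hk⟩ := LieAlgebra.IsSolvable.solvable (R := F) (L := L)
    have hmono : ∀ n, A ≤ LieAlgebra.derivedSeries F L n := by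
      intro n
      induction n with
      | zero =>
        simp [LieAlgebra.derivedSeries_def]
      | succ n ih =>
        rw [LieAlgebra.derivedSeries_def, LieAlgebra.derivedSeriesOfIdeal_succ]
        calc A = ⁅A, A⁆ := h.symm
        _ ≤ _ := LieSubmodule.mono_lie ih ih
    have hbot := hmono k
    rw [hk, le_bot_iff] at hbot
    exact hA.1 hbot
  have hbot : ⁅A, A⁆ = ⊥ := hA.2 _ (lt_of_le_of_ne hle hne)
  intro a ha b hb
  have hmem : ⁅a, b⁆ ∈ ⁅A, A⁆ := LieSubmodule.lie_mem_lie ha hb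
  rw [hbot] at hmem
  simpa using hmem

/-- One-sided version of the main theorem. -/
lemma aux_side [LieAlgebra.IsSolvable L]
    (A : LieIdeal F L) (hA : IsAtom A) (M K : LieSubalgebra F L)
    (hM₁ : ∀ x : L, ∃ a ∈ A, ∃ m ∈ M, x = a + m)
    (hM₂ : ∀ x : L, x ∈ A → x ∈ M → x = 0)
    (hK₁ : ∀ x : L, ∃ a ∈ A, ∃ m ∈ K, x = a + m)
    (hK₂ : ∀ x : L, x ∈ A → x ∈ K → x = 0)
    (hcore : lieCore F L M ≠ lieCore F L K) :
    M ⊓ K < M ∧ ∀ S : LieSubalgebra F L, M ⊓ K < S → S ≤ M → S = M := by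
  have hab := atom_abelian hA
  -- membership helpers for the ideal `A`
  have hAmem : ∀ (x a : L), a ∈ A → ⁅a, x⁆ ∈ A := by
    intro x a ha
    rw [← lie_skew]
    exact A.neg_mem (A.lie_mem ha)
  -- every ideal contained in a complement centralizes A
  have hIdeal : ∀ (N : LieSubalgebra F L), (∀ x : L, x ∈ A → x ∈ N → x = 0) →
      ∀ (I : LieIdeal F L), (I : Set L) ⊆ (N : Set L) → ∀ x ∈ I, ∀ a ∈ A, ⁅a, x⁆ = 0 := by
    intro N hN₂ I hIN x hx a ha
    exact hN₂ _ (hAmem x a ha) (hIN (I.lie_mem hx))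
  -- there is an element of M centralizing A which is not in K
  have hmc : ∃ m, m ∈ M ∧ (∀ a ∈ A, ⁅a, m⁆ = 0) ∧ m ∉ K := by
    by_contra hcon
    push_neg at hcon
    have hMK : ∀ x, x ∈ M → (∀ a ∈ A, ⁅a, x⁆ = 0) → x ∈ K := hcon
    have hKM : ∀ x, x ∈ K → (∀ a ∈ A, ⁅a, x⁆ = 0) → x ∈ M := by
      intro x hxK hxC
      obtain ⟨a, ha, m, hm, hx⟩ := hM₁ x
      have hmC : ∀ a' ∈ A, ⁅a', m⁆ = 0 := by
        intro a' ha'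
        have hmeq : m = x - a := by rw [hx]; abel
        rw [hmeq, lie_sub, hxC a' ha', hab a' ha' a ha, sub_zero]
      have hmK : m ∈ K := hMK m hm hmC
      have haK : a ∈ K := by
        have haeq : a = x - m := by rw [hx]; abel
        rw [haeq]; exact K.sub_mem hxK hmK
      have ha0 : a = 0 := hK₂ a ha haK
      rw [hx, ha0, zero_add]; exact hm
    apply hcore
    unfold lieCore
    congr 1
    ext I
    simp only [Set.mem_setOf_eq]
    constructor
    · intro hIM x hxI
      exact hMK x (hIM hxI) (hIdeal M hM₂ I hIM x hxI)
    · intro hIK x hxI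
      exact hKM x (hIK hxI) (hIdeal K hK₂ I hIK x hxI)
  obtain ⟨m₀, hm₀M, hm₀C, hm₀K⟩ := hmc
  -- every element of A arises from an element of M centralizing A
  have hDA : ∀ a ∈ A, ∃ m, m ∈ M ∧ (∀ a' ∈ A, ⁅a', m⁆ = 0) ∧ ∃ k ∈ K, m = a + k := by
    have hD : ∃ D : LieIdeal F L, ∀ y : L,
        y ∈ D ↔ y ∈ A ∧ ∃ m, m ∈ M ∧ (∀ a' ∈ A, ⁅a', m⁆ = 0) ∧ ∃ k ∈ K, m = y + k := by
      refine ⟨{ carrier := {y : L | y ∈ A ∧ ∃ m, m ∈ M ∧ (∀ a' ∈ A, ⁅a', m⁆ = 0) ∧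
                  ∃ k ∈ K, m = y + k},
                zero_mem' := ?_, add_mem' := ?_, smul_mem' := ?_,
                lie_mem := ?_ }, fun y => Iff.rfl⟩
      · rintro x y ⟨hxA, mx, hmxM, hmxC, kx, hkxK, hx⟩ ⟨hyA, my, hmyM, hmyC, ky, hkyK, hy⟩
        exact ⟨A.add_mem hxA hyA, mx + my, M.add_mem hmxM hmyM,
          fun a' ha' => by rw [lie_add, hmxC a' ha', hmyC a' ha', add_zero],
          kx + ky, K.add_mem hkxK hkyK, by rw [hx, hy]; abel⟩
      · exact ⟨A.zero_mem, 0, M.zero_mem, fun a' _ => lie_zero a', 0, K.zero_mem, by simp⟩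
      · rintro t x ⟨hxA, mx, hmxM, hmxC, kx, hkxK, hx⟩
        exact ⟨A.smul_mem t hxA, t • mx, M.smul_mem t hmxM,
          fun a' ha' => by rw [lie_smul, hmxC a' ha', smul_zero],
          t • kx, K.smul_mem t hkxK, by rw [hx, smul_add]⟩
      · rintro x y ⟨hyA, m, hmM, hmC, k, hkK, hy⟩
        obtain ⟨a₁, ha₁, m₁, hm₁M, hx⟩ := hM₁ x
        have hxy : ⁅x, y⁆ = ⁅m₁, y⁆ := by
          rw [hx, add_lie, hab a₁ ha₁ y hyA, zero_add]
        have hkC : ∀ a' ∈ A, ⁅a', k⁆ = 0 := by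
          intro a' ha'
          have hkeq : k = m - y := by rw [hy]; abel
          rw [hkeq, lie_sub, hmC a' ha', hab a' ha' y hyA, sub_zero]
        obtain ⟨a₂, ha₂, k₂, hk₂K, hm₁⟩ := hK₁ m₁
        have hm₁k : ⁅m₁, k⁆ ∈ K := by
          have heq : ⁅m₁, k⁆ = ⁅k₂, k⁆ := by
            rw [hm₁, add_lie, hkC a₂ ha₂, zero_add]
          rw [heq]; exact K.lie_mem hk₂K hkK
        refine ⟨A.lie_mem hyA, ⁅m₁, m⁆, M.lie_mem hm₁M hmM, ?_, ⁅m₁, k⁆, hm₁k, ?_⟩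
        · intro a' ha'
          rw [leibniz_lie, hmC a' ha', lie_zero, add_zero, hmC _ (hAmem m₁ a' ha')]
        · rw [hxy, hy, lie_add]
    obtain ⟨D, hDmem⟩ := hD
    have hDle : D ≤ A := fun y hy => ((hDmem y).1 hy).1
    have hDeq : D = A := by
      rcases eq_or_lt_of_le hDle with h | h
      · exact h
      · exfalso
        have hDbot := hA.2 D h
        obtain ⟨a, ha, k, hk, hm₀⟩ := hK₁ m₀
        have haD : a ∈ D := (hDmem a).2 ⟨ha, m₀, hm₀M, hm₀C, k, hk, hm₀⟩
        rw [hDbot] at haD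
        have ha0 : a = 0 := by simpa using haD
        apply hm₀K
        rw [hm₀, ha0, zero_add]; exact hk
    intro a ha
    have haD : a ∈ D := by rw [hDeq]; exact ha
    exact ((hDmem a).1 haD).2
  constructor
  · refine lt_of_le_of_ne inf_le_left (fun h => ?_)
    apply hm₀K
    have hm₀MK : m₀ ∈ M ⊓ K := by rw [h]; exact hm₀M
    exact ((LieSubalgebra.mem_inf M K m₀).1 hm₀MK).2
  · intro S hS₁ hS₂
    have hMKS : ∀ x, x ∈ M → x ∈ K → x ∈ S := by
      intro x hxM hxK
      exact hS₁.le ((LieSubalgebra.mem_inf M K x).2 ⟨hxM, hxK⟩)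
    -- the image of S in A is a nonzero ideal
    have hW : ∃ W : LieIdeal F L, ∀ y : L,
        y ∈ W ↔ y ∈ A ∧ ∃ s ∈ S, ∃ k ∈ K, s = y + k := by
      refine ⟨{ carrier := {y : L | y ∈ A ∧ ∃ s ∈ S, ∃ k ∈ K, s = y + k},
                zero_mem' := ?_, add_mem' := ?_, smul_mem' := ?_,
                lie_mem := ?_ }, fun y => Iff.rfl⟩
      · rintro x y ⟨hxA, sx, hsxS, kx, hkxK, hx⟩ ⟨hyA, sy, hsyS, ky, hkyK, hy⟩
        exact ⟨A.add_mem hxA hyA, sx + sy, S.add_mem hsxS hsyS,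
          kx + ky, K.add_mem hkxK hkyK, by rw [hx, hy]; abel⟩
      · exact ⟨A.zero_mem, 0, S.zero_mem, 0, K.zero_mem, by simp⟩
      · rintro t x ⟨hxA, sx, hsxS, kx, hkxK, hx⟩
        exact ⟨A.smul_mem t hxA, t • sx, S.smul_mem t hsxS,
          t • kx, K.smul_mem t hkxK, by rw [hx, smul_add]⟩
      · rintro x y ⟨hyA, s, hsS, k, hkK, hy⟩
        obtain ⟨a₁, ha₁, m₁, hm₁M, hx⟩ := hM₁ x
        obtain ⟨a₂, ha₂, k₂, hk₂K, hm₁⟩ := hK₁ m₁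
        obtain ⟨c, hcM, hcC, k₃, hk₃K, hc⟩ := hDA a₂ ha₂
        have hs₀M : m₁ - c ∈ M := M.sub_mem hm₁M hcM
        have hs₀K : m₁ - c ∈ K := by
          have heq : m₁ - c = k₂ - k₃ := by rw [hm₁, hc]; abel
          rw [heq]; exact K.sub_mem hk₂K hk₃K
        have hs₀S : m₁ - c ∈ S := hMKS _ hs₀M hs₀K
        have hcy : ⁅c, y⁆ = 0 := by
          rw [← lie_skew, hcC y hyA, neg_zero]
        have hxy : ⁅x, y⁆ = ⁅m₁ - c, y⁆ := by
          rw [hx, add_lie, hab a₁ ha₁ y hyA, zero_add, sub_lie, hcy, sub_zero]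
        refine ⟨A.lie_mem hyA, ⁅m₁ - c, s⁆, S.lie_mem hs₀S hsS,
          ⁅m₁ - c, k⁆, K.lie_mem hs₀K hkK, ?_⟩
        rw [hxy, hy, lie_add]
    obtain ⟨W, hWmem⟩ := hW
    have hWle : W ≤ A := fun y hy => ((hWmem y).1 hy).1
    -- W is nonzero
    obtain ⟨s₁, hs₁S, hs₁MK⟩ := SetLike.exists_of_lt hS₁
    have hs₁M : s₁ ∈ M := hS₂ hs₁S
    obtain ⟨a₁, ha₁, k₁, hk₁K, hs₁⟩ := hK₁ s₁
    have ha₁0 : a₁ ≠ 0 := by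
      intro h0
      apply hs₁MK
      refine (LieSubalgebra.mem_inf M K s₁).2 ⟨hs₁M, ?_⟩
      rw [hs₁, h0, zero_add]; exact hk₁K
    have hWne : W ≠ ⊥ := by
      intro hbot
      have : a₁ ∈ W := (hWmem a₁).2 ⟨ha₁, s₁, hs₁S, k₁, hk₁K, hs₁⟩
      rw [hbot] at this
      exact ha₁0 (by simpa using this)
    have hWeq : W = A := by
      rcases eq_or_lt_of_le hWle with h | h
      · exact h
      · exact absurd (hA.2 W h) hWne
    -- conclude S = M
    refine le_antisymm hS₂ ?_
    intro m hm
    obtain ⟨a, ha, k, hkK, hmak⟩ := hK₁ m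
    have haW : a ∈ W := by rw [hWeq]; exact ha
    obtain ⟨-, s, hsS, k', hk'K, hs⟩ := (hWmem a).1 haW
    have hdiffK : m - s ∈ K := by
      have heq : m - s = k - k' := by rw [hmak, hs]; abel
      rw [heq]; exact K.sub_mem hkK hk'K
    have hdiffS : m - s ∈ S := hMKS _ (M.sub_mem hm (hS₂ hsS)) hdiffK
    have hms : m = s + (m - s) := by abel
    rw [hms]
    exact S.add_mem hsS hdiffS

end Aux

/-- Let `A` be a minimal ideal of a finite-dimensional solvable Lie algebra `L` and let
`M`, `K` be complements to `A` in `L` with distinct cores (equivalently, not conjugate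
under `I(L:A)`).  Then `M ∩ K` is a maximal subalgebra of both `M` and `K`. -/
theorem inter_maximal_of_nonconjugate_complements (F : Type*) [Field F]
    (L : Type*) [LieRing L] [LieAlgebra F L] [FiniteDimensional F L]
    [LieAlgebra.IsSolvable L]
    (A : LieIdeal F L) (hA : IsAtom A) (M K : LieSubalgebra F L)
    (hM₁ : ∀ x : L, ∃ a ∈ A, ∃ m ∈ M, x = a + m)
    (hM₂ : ∀ x : L, x ∈ A → x ∈ M → x = 0)
    (hK₁ : ∀ x : L, ∃ a ∈ A, ∃ m ∈ K, x = a + m)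
    (hK₂ : ∀ x : L, x ∈ A → x ∈ K → x = 0)
    (hcore : lieCore F L M ≠ lieCore F L K) :
    (M ⊓ K < M ∧ ∀ S : LieSubalgebra F L, M ⊓ K < S → S ≤ M → S = M) ∧
    (M ⊓ K < K ∧ ∀ S : LieSubalgebra F L, M ⊓ K < S → S ≤ K → S = K) := by
  refine ⟨aux_side A hA M K hM₁ hM₂ hK₁ hK₂ hcore, ?_⟩
  have h := aux_side A hA K M hK₁ hK₂ hM₁ hM₂ hcore.symm
  rwa [inf_comm K M] at h
end
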